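/- Let θ_0 ∈ ℝ^p. For each n, on a probability space (Ω_n, Pr_n), let M_n : ℝ^p × Ω_n → ℝ be a random criterion function with measurable maximizer θ̂_n (i.e. M_n(θ̂_n(ω), ω) = sup_θ M_n(θ, ω)), let Δ_n : Ω_n → ℝ^p be uniformly tight random vectors, and let J_n be symmetric p×p matrices whose smallest eigenvalue satisfies λ_min(J_n) ≥ c > 0 for all large n and which are bounded. Suppose θ̂_n → θ_0 in Pr_n-probability, and that for every random sequence θ̃_n with θ̃_n → θ_0 in Pr_n-probability, writing h̃_n = θ̃_n − θ_0, one has M_n(θ̃_n) − M_n(θ_0) = √n h̃_nᵀ Δ_n − ½ n h̃_nᵀ J_n h̃_n + R_n(θ̃_n), where R_n(θ̃_n)/(√n‖h̃_n‖ + n‖h̃_n‖² + 1) → 0 in Pr_n-probability. Then √n(θ̂_n − θ_0) − J_n^{-1} Δ_n → 0 in Pr_n-probability; in particular √n(θ̂_n − θ_0) is uniformly tight. -/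

import Mathlib

open MeasureTheory Filter Topology RealInnerProductSpace
open scoped ENNReal

lemma tendsto0_iff (f : ℕ → ℝ≥0∞) :
    Tendsto f atTop (𝓝 0) ↔ ∀ η : ℝ, 0 < η → ∀ᶠ n in atTop, f n ≤ ENNReal.ofReal η := by
  rw [ENNReal.tendsto_atTop_zero]
  constructor
  · intro h η hη
    obtain ⟨N, hN⟩ := h (ENNReal.ofReal η) (by simpa using hη)
    exact eventually_atTop.2 ⟨N, hN⟩
  · intro h ε hε
    have hη : (0:ℝ) < (min ε 1).toReal := by
      apply ENNReal.toReal_pos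
      · simp only [ne_eq, min_eq_iff, not_or]
        push_neg
        constructor
        · intro h1; exact absurd h1 hε.ne'
        · intro h1; exact absurd h1 one_ne_zero
      · exact (min_le_right _ _).trans_lt (by norm_num) |>.ne
    obtain ⟨N, hN⟩ := eventually_atTop.1 (h _ hη)
    refine ⟨N, fun n hn => (hN n hn).trans ?_⟩
    rw [ENNReal.ofReal_toReal]
    · exact min_le_left _ _
    · exact ((min_le_right _ _).trans_lt (by norm_num)).ne

lemma quad_bound (a h : ℝ) (h0 : 0 ≤ h) (ha : 1 ≤ a) (hq : h^2 ≤ a*h + 1) : h ≤ a + 1 := by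
  nlinarith [sq_nonneg (h - (a+1))]

section matrixAux
variable {d : ℕ}

lemma symm_inner (J : Matrix (Fin d) (Fin d) ℝ) (hs : J.IsSymm)
    (x y : EuclideanSpace ℝ (Fin d)) :
    ⟪(Matrix.toEuclideanCLM (𝕜 := ℝ) J) x, y⟫ = ⟪x, (Matrix.toEuclideanCLM (𝕜 := ℝ) J) y⟫ := by
  have h1 : IsSelfAdjoint (Matrix.toEuclideanCLM (𝕜 := ℝ) J) := by
    have hJ : star J = J := by
      rw [Matrix.star_eq_conjTranspose, Matrix.conjTranspose_eq_transpose_of_trivial]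
      exact hs
    rw [IsSelfAdjoint, ← map_star, hJ]
  exact h1.isSymmetric x y

lemma inv_right (J : Matrix (Fin d) (Fin d) ℝ) (c : ℝ) (hc : 0 < c)
    (hlb : ∀ v : EuclideanSpace ℝ (Fin d),
      c * ‖v‖ ^ 2 ≤ ⟪v, (Matrix.toEuclideanCLM (𝕜 := ℝ) J) v⟫) :
    ∀ v : EuclideanSpace ℝ (Fin d),
      (Matrix.toEuclideanCLM (𝕜 := ℝ) J) ((Matrix.toEuclideanCLM (𝕜 := ℝ) J⁻¹) v) = v := by
  have hinj : ∀ w : EuclideanSpace ℝ (Fin d),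
      (Matrix.toEuclideanCLM (𝕜 := ℝ) J) w = 0 → w = 0 := by
    intro w hw
    have := hlb w
    rw [hw] at this
    simp only [inner_zero_right] at this
    have : ‖w‖ ^ 2 ≤ 0 := by nlinarith
    have : ‖w‖ = 0 := by nlinarith [sq_nonneg ‖w‖, norm_nonneg w]
    simpa using this
  have hdet : J.det ≠ 0 := by
    intro hdet
    obtain ⟨v, hv0, hv⟩ := (Matrix.exists_mulVec_eq_zero_iff).2 hdet
    apply hv0
    have : (Matrix.toEuclideanCLM (𝕜 := ℝ) J) ((WithLp.equiv _ _).symm v) = 0 := by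
      simp only [WithLp.equiv_symm_apply, Matrix.toEuclideanCLM_toLp]
      simp [Matrix.toLin'_apply, hv]
    have h2 := hinj _ this
    have := congrArg (WithLp.equiv 2 _) h2
    simpa using this
  have hmul : J * J⁻¹ = 1 := Matrix.mul_nonsing_inv J (isUnit_iff_ne_zero.2 hdet)
  intro v
  have : (Matrix.toEuclideanCLM (𝕜 := ℝ) J) * (Matrix.toEuclideanCLM (𝕜 := ℝ) J⁻¹)
      = 1 := by
    rw [← map_mul, hmul, map_one]
  calc (Matrix.toEuclideanCLM (𝕜 := ℝ) J) ((Matrix.toEuclideanCLM (𝕜 := ℝ) J⁻¹) v)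
      = ((Matrix.toEuclideanCLM (𝕜 := ℝ) J) * (Matrix.toEuclideanCLM (𝕜 := ℝ) J⁻¹)) v := rfl
    _ = v := by rw [this]; rfl

lemma inv_norm_bound (J : Matrix (Fin d) (Fin d) ℝ) (c : ℝ) (hc : 0 < c)
    (hlb : ∀ v : EuclideanSpace ℝ (Fin d),
      c * ‖v‖ ^ 2 ≤ ⟪v, (Matrix.toEuclideanCLM (𝕜 := ℝ) J) v⟫) :
    ∀ v : EuclideanSpace ℝ (Fin d),
      ‖(Matrix.toEuclideanCLM (𝕜 := ℝ) J⁻¹) v‖ ≤ c⁻¹ * ‖v‖ := by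
  intro v
  set w := (Matrix.toEuclideanCLM (𝕜 := ℝ) J⁻¹) v with hw
  have hAw : (Matrix.toEuclideanCLM (𝕜 := ℝ) J) w = v := inv_right J c hc hlb v
  have h1 : c * ‖w‖ ^ 2 ≤ ⟪w, v⟫ := by rw [← hAw]; exact hlb w
  have h2 : ⟪w, v⟫ ≤ ‖w‖ * ‖v‖ := real_inner_le_norm w v
  rcases eq_or_lt_of_le (norm_nonneg w) with h | h
  · rw [← h]; positivity
  · have h3 : c * ‖w‖ ≤ ‖v‖ := by nlinarith
    rw [inv_mul_eq_div, le_div_iff₀ hc]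
    linarith

lemma det_tight (c K q : ℝ) (hc : 0 < c) (hK : 0 ≤ K)
    (h Δv : EuclideanSpace ℝ (Fin d))
    (A : EuclideanSpace ℝ (Fin d) →L[ℝ] EuclideanSpace ℝ (Fin d))
    (hlb : c * ‖h‖^2 ≤ ⟪h, A h⟫)
    (hΔ : ‖Δv‖ ≤ K)
    (hq : |q| ≤ c/4)
    (hpos : 0 ≤ ⟪h, Δv⟫ - (1/2) * ⟪h, A h⟫ + q * (‖h‖ + ‖h‖^2 + 1)) :
    ‖h‖ ≤ 4*K/c + 2 := by
  have h1 : ⟪h, Δv⟫ ≤ ‖h‖ * K := by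
    calc ⟪h, Δv⟫ ≤ ‖h‖ * ‖Δv‖ := real_inner_le_norm h Δv
    _ ≤ ‖h‖ * K := by nlinarith [norm_nonneg h]
  have hD : (0:ℝ) ≤ ‖h‖ + ‖h‖^2 + 1 := by positivity
  have h2 : q * (‖h‖ + ‖h‖^2 + 1) ≤ (c/4) * (‖h‖ + ‖h‖^2 + 1) := by
    nlinarith [le_abs_self q]
  have h3 : ‖h‖^2 ≤ (4*K/c + 1) * ‖h‖ + 1 := by
    rw [show (4*K/c + 1) * ‖h‖ + 1 = ((4*K + c) * ‖h‖ + c)/c by field_simp,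
      le_div_iff₀ hc]
    nlinarith [norm_nonneg h]
  have ha : (1:ℝ) ≤ 4*K/c + 1 := by
    have : (0:ℝ) ≤ 4*K/c := by positivity
    linarith
  have := quad_bound (4*K/c + 1) ‖h‖ (norm_nonneg h) ha h3
  linarith

lemma det_diff (c ε δ q1 q2 B G : ℝ) (hc : 0 < c) (hε : 0 < ε)
    (h g Δv : EuclideanSpace ℝ (Fin d))
    (A : EuclideanSpace ℝ (Fin d) →L[ℝ] EuclideanSpace ℝ (Fin d))
    (hsym : ∀ x y, ⟪A x, y⟫ = ⟪x, A y⟫)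
    (hlb : ∀ v, c * ‖v‖^2 ≤ ⟪v, A v⟫)
    (hAg : A g = Δv)
    (hB : ‖h‖ ≤ B) (hG : ‖g‖ ≤ G)
    (hq1 : |q1| ≤ δ) (hq2 : |q2| ≤ δ)
    (hδ : δ * ((B + B^2 + 1) + (G + G^2 + 1)) ≤ c/2 * ε^2)
    (hineq : 0 ≤ (⟪h, Δv⟫ - (1/2) * ⟪h, A h⟫ + q1 * (‖h‖ + ‖h‖^2 + 1))
        - (⟪g, Δv⟫ - (1/2) * ⟪g, A g⟫ + q2 * (‖g‖ + ‖g‖^2 + 1))) :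
    ‖h - g‖ ≤ ε := by
  have hB0 : 0 ≤ B := (norm_nonneg h).trans hB
  have hG0 : 0 ≤ G := (norm_nonneg g).trans hG
  have hδ0 : 0 ≤ δ := (abs_nonneg q1).trans hq1
  have key : ⟪h - g, A (h - g)⟫ = ⟪h, A h⟫ - 2 * ⟪h, Δv⟫ + ⟪g, Δv⟫ := by
    have e1 : ⟪h, A g⟫ = ⟪h, Δv⟫ := by rw [hAg]
    have e2 : ⟪g, A h⟫ = ⟪h, Δv⟫ := by rw [← hsym g h, hAg, real_inner_comm]
    have e3 : ⟪g, A g⟫ = ⟪g, Δv⟫ := by rw [hAg]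
    rw [map_sub, inner_sub_left, inner_sub_right, inner_sub_right, e1, e2, e3]
    ring
  have e3 : ⟪g, A g⟫ = ⟪g, Δv⟫ := by rw [hAg]
  have hlb2 := hlb (h - g)
  have hDpos1 : (0:ℝ) ≤ ‖h‖ + ‖h‖^2 + 1 := by positivity
  have hDpos2 : (0:ℝ) ≤ ‖g‖ + ‖g‖^2 + 1 := by positivity
  have d1 : ‖h‖ + ‖h‖^2 + 1 ≤ B + B^2 + 1 := by nlinarith [norm_nonneg h]
  have d2 : ‖g‖ + ‖g‖^2 + 1 ≤ G + G^2 + 1 := by nlinarith [norm_nonneg g]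
  have hD1 : q1 * (‖h‖ + ‖h‖^2 + 1) ≤ δ * (B + B^2 + 1) := by
    calc q1 * (‖h‖ + ‖h‖^2 + 1) ≤ δ * (‖h‖ + ‖h‖^2 + 1) :=
          mul_le_mul_of_nonneg_right ((le_abs_self q1).trans hq1) hDpos1
      _ ≤ δ * (B + B^2 + 1) := mul_le_mul_of_nonneg_left d1 hδ0
  have hD2 : -(q2 * (‖g‖ + ‖g‖^2 + 1)) ≤ δ * (G + G^2 + 1) := by
    rw [← neg_mul]
    calc (-q2) * (‖g‖ + ‖g‖^2 + 1) ≤ δ * (‖g‖ + ‖g‖^2 + 1) :=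
          mul_le_mul_of_nonneg_right ((neg_le_abs q2).trans hq2) hDpos2
      _ ≤ δ * (G + G^2 + 1) := mul_le_mul_of_nonneg_left d2 hδ0
  have hsq : ‖h - g‖^2 ≤ ε^2 := by
    rw [e3] at hineq
    have hc2 : c * ‖h - g‖^2 ≤ c * ε^2 := by linarith
    exact le_of_mul_le_mul_left hc2 hc
  nlinarith [norm_nonneg (h - g)]

lemma expand_eq (n : ℕ) (A : EuclideanSpace ℝ (Fin d) →L[ℝ] EuclideanSpace ℝ (Fin d))
    (x Δv : EuclideanSpace ℝ (Fin d)) (Mv : ℝ) :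
    Mv = ⟪Real.sqrt n • x, Δv⟫ - (1/2) * ⟪Real.sqrt n • x, A (Real.sqrt n • x)⟫
      + ((Mv - (Real.sqrt n * ⟪x, Δv⟫ - (1/2) * (n:ℝ) * ⟪x, A x⟫)) /
          (Real.sqrt n * ‖x‖ + (n:ℝ) * ‖x‖^2 + 1))
        * (‖Real.sqrt n • x‖ + ‖Real.sqrt n • x‖^2 + 1) := by
  have hs : (0:ℝ) ≤ Real.sqrt n := Real.sqrt_nonneg n
  have hss : Real.sqrt n * Real.sqrt n = (n:ℝ) := Real.mul_self_sqrt (Nat.cast_nonneg n)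
  have c1 : ⟪Real.sqrt n • x, Δv⟫ = Real.sqrt n * ⟪x, Δv⟫ := real_inner_smul_left x Δv _
  have c2 : ⟪Real.sqrt n • x, A (Real.sqrt n • x)⟫ = (n:ℝ) * ⟪x, A x⟫ := by
    rw [A.map_smul, real_inner_smul_left, real_inner_smul_right, ← mul_assoc, hss]
  have c3 : ‖Real.sqrt n • x‖ = Real.sqrt n * ‖x‖ := by
    rw [norm_smul, Real.norm_eq_abs, abs_of_nonneg hs]
  have c4 : ‖Real.sqrt n • x‖^2 = (n:ℝ) * ‖x‖^2 := by
    rw [c3, mul_pow, pow_two, hss]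
  rw [c1, c2, c4, c3]
  have hden : (0:ℝ) < Real.sqrt n * ‖x‖ + (n:ℝ) * ‖x‖^2 + 1 := by positivity
  field_simp
  ring

end matrixAux

lemma sqrt_nat_tendsto : Filter.Tendsto (fun n : ℕ => Real.sqrt n) Filter.atTop Filter.atTop := by
  rw [tendsto_atTop_atTop]
  intro b
  refine ⟨⌈b^2⌉₊, fun n hn => ?_⟩
  rcases le_or_gt b 0 with hb | hb
  · exact hb.trans (Real.sqrt_nonneg _)
  · rw [show (b:ℝ) = Real.sqrt (b^2) by rw [Real.sqrt_sq hb.le]]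
    apply Real.sqrt_le_sqrt
    calc b^2 ≤ (⌈b^2⌉₊:ℝ) := Nat.le_ceil _
      _ ≤ n := by exact_mod_cast hn

lemma single_tight {Ωn : Type*} [MeasurableSpace Ωn] (Pr : Measure Ωn)
    [IsProbabilityMeasure Pr] (X : Ωn → ℝ) (hX : Measurable X) (ε : ℝ) (hε : 0 < ε) :
    ∃ Mb : ℝ, Pr {ω | Mb < X ω} < ENNReal.ofReal ε := by
  have hmeas : ∀ j : ℕ, NullMeasurableSet {ω | (j:ℝ) < X ω} Pr := fun j =>
    (measurableSet_lt measurable_const hX).nullMeasurableSet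
  have hanti : Antitone (fun j : ℕ => {ω | (j:ℝ) < X ω}) := by
    intro i j hij ω hω
    simp only [Set.mem_setOf_eq] at *
    exact lt_of_le_of_lt (by exact_mod_cast hij) hω
  have hempty : ⋂ j : ℕ, {ω | (j:ℝ) < X ω} = ∅ := by
    ext ω
    simp only [Set.mem_iInter, Set.mem_setOf_eq, Set.mem_empty_iff_false, iff_false, not_forall,
      not_lt]
    obtain ⟨j, hj⟩ := exists_nat_gt (X ω)
    exact ⟨j, hj.le⟩
  have := tendsto_measure_iInter_atTop (μ := Pr) hmeas hanti ⟨0, measure_ne_top _ _⟩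
  rw [hempty, measure_empty] at this
  have hlt := Filter.Tendsto.eventually_lt_const
    (show (0:ℝ≥0∞) < ENNReal.ofReal ε by simpa using hε) this
  obtain ⟨j, hj⟩ := hlt.exists
  exact ⟨j, hj⟩

lemma tight_of_eventually {Ω : ℕ → Type*} [∀ n, MeasurableSpace (Ω n)]
    (Pr : ∀ n, Measure (Ω n)) (hPr : ∀ n, IsProbabilityMeasure (Pr n))
    (X : ∀ n, Ω n → ℝ) (hm : ∀ n, Measurable (X n))
    (h : ∀ ε > (0:ℝ), ∃ Mb : ℝ, ∀ᶠ n in atTop, Pr n {ω | Mb < X n ω} ≤ ENNReal.ofReal ε) :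
    ∀ ε > (0:ℝ), ∃ Mb : ℝ, ∀ n, Pr n {ω | Mb < X n ω} < ENNReal.ofReal ε := by
  intro ε hε
  obtain ⟨Mb0, hMb0⟩ := h (ε/2) (by positivity)
  obtain ⟨N, hN⟩ := eventually_atTop.1 hMb0
  have hsingle : ∀ n : ℕ, ∃ Mb : ℝ, Pr n {ω | Mb < X n ω} < ENNReal.ofReal ε := fun n =>
    haveI := hPr n
    single_tight (Pr n) (X n) (hm n) ε hε
  choose Mn hMn using hsingle
  obtain ⟨R, hR⟩ := ((Set.finite_Iio N).image Mn).bddAbove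
  refine ⟨max Mb0 (max R 0), fun n => ?_⟩
  rcases lt_or_ge n N with hn | hn
  · refine lt_of_le_of_lt (measure_mono fun ω hω => ?_) (hMn n)
    have hMnR : Mn n ≤ R := hR (Set.mem_image_of_mem Mn hn)
    simp only [Set.mem_setOf_eq] at *
    calc Mn n ≤ R := hMnR
      _ ≤ max Mb0 (max R 0) := le_trans (le_max_left _ _) (le_max_right _ _)
      _ < X n ω := hω
  · refine lt_of_le_of_lt (le_trans (measure_mono fun ω hω => ?_) (hN n hn)) ?_
    · simp only [Set.mem_setOf_eq] at *
      exact lt_of_le_of_lt (le_max_left _ _) hω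
    · exact ENNReal.ofReal_lt_ofReal_iff hε |>.2 (by linarith)
/-- From the random quadratic expansion of the criterion function and
consistency of the maximizer, one obtains `√n(θ̂ₙ − θ₀) − Jₙ⁻¹Δₙ → 0` in probability; in
particular `√n(θ̂ₙ − θ₀)` is uniformly tight. -/
theorem stmt_13
    (d : ℕ) (θ0 : EuclideanSpace ℝ (Fin d))
    (Ω : ℕ → Type*) [∀ n, MeasurableSpace (Ω n)]
    (Pr : (n : ℕ) → Measure (Ω n)) (hPr : ∀ n, IsProbabilityMeasure (Pr n))
    (M : (n : ℕ) → EuclideanSpace ℝ (Fin d) → Ω n → ℝ)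
    -- θ̂ₙ : a measurable maximizer of θ ↦ Mₙ(θ, ω)
    (θhat : (n : ℕ) → Ω n → EuclideanSpace ℝ (Fin d))
    (hθhatm : ∀ n, Measurable (θhat n))
    (hmax : ∀ (n : ℕ) (ω : Ω n) (θ : EuclideanSpace ℝ (Fin d)), M n θ ω ≤ M n (θhat n ω) ω)
    -- uniformly tight random vectors Δₙ
    (Δ : (n : ℕ) → Ω n → EuclideanSpace ℝ (Fin d))
    (hΔtight : ∀ ε > (0 : ℝ), ∃ Mb : ℝ, ∀ n,
      Pr n {ω | Mb < ‖Δ n ω‖} < ENNReal.ofReal ε)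
    -- symmetric Jₙ, eventually with smallest eigenvalue ≥ c > 0, and bounded
    (Jn : ℕ → Matrix (Fin d) (Fin d) ℝ) (hJnsym : ∀ n, (Jn n).IsSymm)
    (hJnlb : ∃ c > (0 : ℝ), ∀ᶠ n in atTop, ∀ v : EuclideanSpace ℝ (Fin d),
      c * ‖v‖ ^ 2 ≤ ⟪v, (Matrix.toEuclideanCLM (𝕜 := ℝ) (Jn n)) v⟫)
    (hJnbd : ∃ C : ℝ, ∀ n, ‖Matrix.toEuclideanCLM (𝕜 := ℝ) (Jn n)‖ ≤ C)
    -- consistency: θ̂ₙ → θ₀ in probability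
    (hcons : ∀ ε > (0 : ℝ),
      Tendsto (fun n => Pr n {ω | ε < ‖θhat n ω - θ0‖}) atTop (𝓝 0))
    -- the random quadratic expansion, valid for every random θ̃ₙ → θ₀ in probability
    (hexp : ∀ θtil : (n : ℕ) → Ω n → EuclideanSpace ℝ (Fin d),
      (∀ ε > (0 : ℝ),
        Tendsto (fun n => Pr n {ω | ε < ‖θtil n ω - θ0‖}) atTop (𝓝 0)) →
      ∀ ε > (0 : ℝ),
        Tendsto (fun n => Pr n {ω | ε <
            |(M n (θtil n ω) ω - M n θ0 ω -
              (Real.sqrt n * ⟪θtil n ω - θ0, Δ n ω⟫ -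
                (1 / 2) * (n : ℝ) *
                  ⟪θtil n ω - θ0,
                    (Matrix.toEuclideanCLM (𝕜 := ℝ) (Jn n)) (θtil n ω - θ0)⟫)) /
              (Real.sqrt n * ‖θtil n ω - θ0‖ + (n : ℝ) * ‖θtil n ω - θ0‖ ^ 2 + 1)|})
          atTop (𝓝 0)) :
    (∀ ε > (0 : ℝ),
      Tendsto (fun n => Pr n {ω | ε <
          ‖Real.sqrt n • (θhat n ω - θ0) -
            (Matrix.toEuclideanCLM (𝕜 := ℝ) ((Jn n)⁻¹)) (Δ n ω)‖})
        atTop (𝓝 0)) ∧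
    (∀ ε > (0 : ℝ), ∃ Mb : ℝ, ∀ n,
      Pr n {ω | Mb < ‖Real.sqrt n • (θhat n ω - θ0)‖} < ENNReal.ofReal ε) := by
  classical
  haveI : ∀ n, IsProbabilityMeasure (Pr n) := hPr
  obtain ⟨c, hc, hJev⟩ := hJnlb
  -- tightness of Δ with a nonnegative constant
  have hΔtight' : ∀ ε > (0:ℝ), ∃ K : ℝ, 0 ≤ K ∧ ∀ n,
      Pr n {ω | K < ‖Δ n ω‖} < ENNReal.ofReal ε := by
    intro ε hε
    obtain ⟨K, hK⟩ := hΔtight ε hε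
    refine ⟨max K 0, le_max_right _ _, fun n => lt_of_le_of_lt (measure_mono ?_) (hK n)⟩
    intro ω hω
    simp only [Set.mem_setOf_eq] at *
    exact lt_of_le_of_lt (le_max_left _ _) hω
  -- expansion along θ̂
  have hq1T := hexp θhat hcons
  -- the auxiliary sequence θ*
  set θstar : (n : ℕ) → Ω n → EuclideanSpace ℝ (Fin d) :=
    fun n ω => θ0 + (Real.sqrt n)⁻¹ • (Matrix.toEuclideanCLM (𝕜 := ℝ) ((Jn n)⁻¹)) (Δ n ω)
    with hθstar
  -- θ* is consistent
  have hstarconv : ∀ ε > (0:ℝ),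
      Tendsto (fun n => Pr n {ω | ε < ‖θstar n ω - θ0‖}) atTop (𝓝 0) := by
    intro ε hε
    rw [tendsto0_iff]
    intro η hη
    obtain ⟨K, hK0, hK⟩ := hΔtight' η hη
    have hNev : ∀ᶠ n : ℕ in atTop, K / (c * ε) ≤ Real.sqrt n :=
      sqrt_nat_tendsto.eventually_ge_atTop _
    filter_upwards [hNev, hJev, eventually_ge_atTop 1] with n hsqrt hJn hn1
    refine le_trans (measure_mono ?_) (hK n).le
    intro ω hω
    simp only [Set.mem_setOf_eq] at *
    by_contra hcon
    push_neg at hcon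
    apply absurd hω
    push_neg
    have hspos : (0:ℝ) < Real.sqrt n :=
      Real.sqrt_pos.2 (by exact_mod_cast Nat.lt_of_lt_of_le Nat.zero_lt_one hn1)
    have hg : ‖(Matrix.toEuclideanCLM (𝕜 := ℝ) ((Jn n)⁻¹)) (Δ n ω)‖ ≤ c⁻¹ * ‖Δ n ω‖ :=
      inv_norm_bound (Jn n) c hc hJn (Δ n ω)
    have hxstar : θstar n ω - θ0
        = (Real.sqrt n)⁻¹ • (Matrix.toEuclideanCLM (𝕜 := ℝ) ((Jn n)⁻¹)) (Δ n ω) :=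
      add_sub_cancel_left _ _
    rw [hxstar, norm_smul, Real.norm_eq_abs, abs_of_nonneg (inv_nonneg.2 hspos.le)]
    have hb1 : ‖(Matrix.toEuclideanCLM (𝕜 := ℝ) ((Jn n)⁻¹)) (Δ n ω)‖ ≤ c⁻¹ * K :=
      hg.trans (mul_le_mul_of_nonneg_left hcon (inv_nonneg.2 hc.le))
    have h2 : K ≤ Real.sqrt n * (c * ε) := by
      rwa [div_le_iff₀ (by positivity)] at hsqrt
    calc (Real.sqrt n)⁻¹ * ‖(Matrix.toEuclideanCLM (𝕜 := ℝ) ((Jn n)⁻¹)) (Δ n ω)‖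
        ≤ (Real.sqrt n)⁻¹ * (c⁻¹ * K) :=
          mul_le_mul_of_nonneg_left hb1 (inv_nonneg.2 hspos.le)
      _ ≤ ε := by
          rw [show (Real.sqrt n)⁻¹ * (c⁻¹ * K) = K / (Real.sqrt n * c) by field_simp,
            div_le_iff₀ (by positivity)]
          nlinarith
  have hq2T := hexp θstar hstarconv
  -- Step B: eventual uniform tightness of √n (θ̂ - θ0)
  have stepB : ∀ η > (0:ℝ), ∃ B : ℝ, 1 ≤ B ∧ ∀ᶠ n in atTop,
      Pr n {ω | B < ‖Real.sqrt n • (θhat n ω - θ0)‖} ≤ ENNReal.ofReal η := by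
    intro η hη
    obtain ⟨K, hK0, hK⟩ := hΔtight' (η/2) (by positivity)
    have hB1 : (1:ℝ) ≤ 4*K/c + 2 := by
      have : (0:ℝ) ≤ 4*K/c := by positivity
      linarith
    refine ⟨4*K/c + 2, hB1, ?_⟩
    have hq1ev := (tendsto0_iff _).1 (hq1T (c/4) (by positivity)) (η/2) (by positivity)
    filter_upwards [hq1ev, hJev] with n hq hJn
    have hsub : {ω | 4*K/c + 2 < ‖Real.sqrt n • (θhat n ω - θ0)‖} ⊆
        {ω | c/4 <
            |(M n (θhat n ω) ω - M n θ0 ω -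
              (Real.sqrt n * ⟪θhat n ω - θ0, Δ n ω⟫ -
                (1 / 2) * (n : ℝ) *
                  ⟪θhat n ω - θ0,
                    (Matrix.toEuclideanCLM (𝕜 := ℝ) (Jn n)) (θhat n ω - θ0)⟫)) /
              (Real.sqrt n * ‖θhat n ω - θ0‖ + (n : ℝ) * ‖θhat n ω - θ0‖ ^ 2 + 1)|}
          ∪ {ω | K < ‖Δ n ω‖} := by
      intro ω hω
      by_contra hcon
      simp only [Set.mem_union, Set.mem_setOf_eq, not_or, not_lt] at hcon
      obtain ⟨hqω, hΔω⟩ := hcon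
      simp only [Set.mem_setOf_eq] at hω
      apply absurd hω
      push_neg
      have hpos : 0 ≤ M n (θhat n ω) ω - M n θ0 ω := sub_nonneg.2 (hmax n ω θ0)
      have e1 := expand_eq (d := d) n (Matrix.toEuclideanCLM (𝕜 := ℝ) (Jn n))
        (θhat n ω - θ0) (Δ n ω) (M n (θhat n ω) ω - M n θ0 ω)
      rw [e1] at hpos
      exact det_tight c K _ hc hK0 _ _ _ (hJn _) hΔω hqω hpos
    calc Pr n {ω | 4*K/c + 2 < ‖Real.sqrt n • (θhat n ω - θ0)‖}
        ≤ Pr n _ := measure_mono hsub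
      _ ≤ _ + _ := measure_union_le _ _
      _ ≤ ENNReal.ofReal (η/2) + ENNReal.ofReal (η/2) := add_le_add hq (hK n).le
      _ = ENNReal.ofReal η := by
          have h2 : (0:ℝ) ≤ η/2 := by positivity
          rw [← ENNReal.ofReal_add h2 h2]
          norm_num
  -- Conclusion 2
  have concl2 : ∀ ε > (0 : ℝ), ∃ Mb : ℝ, ∀ n,
      Pr n {ω | Mb < ‖Real.sqrt n • (θhat n ω - θ0)‖} < ENNReal.ofReal ε := by
    have hmeas : ∀ n, Measurable fun ω : Ω n => ‖Real.sqrt n • (θhat n ω - θ0)‖ := by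
      intro n
      have hcont : Continuous fun y : EuclideanSpace ℝ (Fin d) => ‖Real.sqrt n • (y - θ0)‖ :=
        by fun_prop
      exact hcont.measurable.comp (hθhatm n)
    refine tight_of_eventually Pr hPr _ hmeas ?_
    intro ε hε
    obtain ⟨B, hB1, hBev⟩ := stepB ε hε
    exact ⟨B, hBev⟩
  refine ⟨?_, concl2⟩
  -- Conclusion 1
  intro ε hε
  rw [tendsto0_iff]
  intro η hη
  obtain ⟨K, hK0, hK⟩ := hΔtight' (η/4) (by positivity)
  obtain ⟨B, hB1, hBev⟩ := stepB (η/4) (by positivity)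
  have hB0 : (0:ℝ) ≤ B := by linarith
  have hG0 : (0:ℝ) ≤ c⁻¹ * K := mul_nonneg (inv_nonneg.2 hc.le) hK0
  set G : ℝ := c⁻¹ * K with hGdef
  set S : ℝ := (B + B^2 + 1) + (G + G^2 + 1) with hSdef
  have hS : (0:ℝ) < S := by nlinarith [sq_nonneg B, sq_nonneg G]
  set δ : ℝ := min (c/4) (c/2 * ε^2 / S) with hδdef
  have hδ0 : (0:ℝ) < δ := lt_min (by positivity) (by positivity)
  have hδS : δ * S ≤ c/2 * ε^2 := by
    calc δ * S ≤ (c/2 * ε^2 / S) * S :=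
          mul_le_mul_of_nonneg_right (min_le_right _ _) hS.le
      _ = c/2 * ε^2 := div_mul_cancel₀ _ hS.ne'
  have hq1ev := (tendsto0_iff _).1 (hq1T δ hδ0) (η/4) (by positivity)
  have hq2ev := (tendsto0_iff _).1 (hq2T δ hδ0) (η/4) (by positivity)
  filter_upwards [hq1ev, hq2ev, hBev, hJev, eventually_ge_atTop 1] with n h1 h2 hB hJn hn1
  have hspos : (0:ℝ) < Real.sqrt n :=
    Real.sqrt_pos.2 (by exact_mod_cast Nat.lt_of_lt_of_le Nat.zero_lt_one hn1)
  have hsub : {ω | ε < ‖Real.sqrt n • (θhat n ω - θ0) -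
        (Matrix.toEuclideanCLM (𝕜 := ℝ) ((Jn n)⁻¹)) (Δ n ω)‖} ⊆
      ({ω | δ <
            |(M n (θhat n ω) ω - M n θ0 ω -
              (Real.sqrt n * ⟪θhat n ω - θ0, Δ n ω⟫ -
                (1 / 2) * (n : ℝ) *
                  ⟪θhat n ω - θ0,
                    (Matrix.toEuclideanCLM (𝕜 := ℝ) (Jn n)) (θhat n ω - θ0)⟫)) /
              (Real.sqrt n * ‖θhat n ω - θ0‖ + (n : ℝ) * ‖θhat n ω - θ0‖ ^ 2 + 1)|}
        ∪ {ω | δ <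
            |(M n (θstar n ω) ω - M n θ0 ω -
              (Real.sqrt n * ⟪θstar n ω - θ0, Δ n ω⟫ -
                (1 / 2) * (n : ℝ) *
                  ⟪θstar n ω - θ0,
                    (Matrix.toEuclideanCLM (𝕜 := ℝ) (Jn n)) (θstar n ω - θ0)⟫)) /
              (Real.sqrt n * ‖θstar n ω - θ0‖ + (n : ℝ) * ‖θstar n ω - θ0‖ ^ 2 + 1)|})
      ∪ ({ω | B < ‖Real.sqrt n • (θhat n ω - θ0)‖} ∪ {ω | K < ‖Δ n ω‖}) := by
    intro ω hω
    by_contra hcon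
    simp only [Set.mem_union, Set.mem_setOf_eq, not_or, not_lt] at hcon
    obtain ⟨⟨hq1ω, hq2ω⟩, hBω, hKω⟩ := hcon
    simp only [Set.mem_setOf_eq] at hω
    apply absurd hω
    push_neg
    have hAB := inv_right (Jn n) c hc hJn (Δ n ω)
    have hgn := inv_norm_bound (Jn n) c hc hJn (Δ n ω)
    have hG' : ‖(Matrix.toEuclideanCLM (𝕜 := ℝ) ((Jn n)⁻¹)) (Δ n ω)‖ ≤ G := by
      rw [hGdef]
      exact hgn.trans (mul_le_mul_of_nonneg_left hKω (inv_nonneg.2 hc.le))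
    have hxstar : θstar n ω - θ0
        = (Real.sqrt n)⁻¹ • (Matrix.toEuclideanCLM (𝕜 := ℝ) ((Jn n)⁻¹)) (Δ n ω) :=
      add_sub_cancel_left _ _
    have hsg : Real.sqrt n • (θstar n ω - θ0)
        = (Matrix.toEuclideanCLM (𝕜 := ℝ) ((Jn n)⁻¹)) (Δ n ω) := by
      rw [hxstar, smul_smul, mul_inv_cancel₀ hspos.ne', one_smul]
    have e1 := expand_eq (d := d) n (Matrix.toEuclideanCLM (𝕜 := ℝ) (Jn n))
      (θhat n ω - θ0) (Δ n ω) (M n (θhat n ω) ω - M n θ0 ω)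
    have e2 := expand_eq (d := d) n (Matrix.toEuclideanCLM (𝕜 := ℝ) (Jn n))
      (θstar n ω - θ0) (Δ n ω) (M n (θstar n ω) ω - M n θ0 ω)
    rw [hsg] at e2
    have hineq : 0 ≤ (M n (θhat n ω) ω - M n θ0 ω) - (M n (θstar n ω) ω - M n θ0 ω) := by
      have := hmax n ω (θstar n ω)
      linarith
    rw [e1, e2] at hineq
    exact det_diff c ε δ _ _ B G hc hε _ _ _ _
      (fun x y => symm_inner (Jn n) (hJnsym n) x y) hJn hAB hBω hG' hq1ω hq2ω hδS hineq
  calc Pr n {ω | ε < ‖Real.sqrt n • (θhat n ω - θ0) -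
        (Matrix.toEuclideanCLM (𝕜 := ℝ) ((Jn n)⁻¹)) (Δ n ω)‖}
      ≤ Pr n _ := measure_mono hsub
    _ ≤ _ + _ := measure_union_le _ _
    _ ≤ (_ + _) + (_ + _) := add_le_add (measure_union_le _ _) (measure_union_le _ _)
    _ ≤ (ENNReal.ofReal (η/4) + ENNReal.ofReal (η/4))
        + (ENNReal.ofReal (η/4) + ENNReal.ofReal (η/4)) :=
        add_le_add (add_le_add h1 h2) (add_le_add hB (hK n).le)
    _ = ENNReal.ofReal η := by
        have h4 : (0:ℝ) ≤ η/4 := by positivity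
        have h44 : (0:ℝ) ≤ η/4 + η/4 := by positivity
        rw [← ENNReal.ofReal_add h4 h4, ← ENNReal.ofReal_add h44 h44]
        congr 1
        ring
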